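/- Theorem A, part (b): with μ the Gibbs measure of f on a finite product space and 𝒫 a partition such that ‖∇f(x,·) - ∇f(y,·)‖_∞ < δn whenever x, y lie in the same cell, we have Σ_{P∈𝒫} μ(P) ∫ D(μ|_P ‖ ξ_{∇f(y,·)}) μ|_P(dy) < H_μ(𝒫) + δn. -/

import Mathlib

open Real Finset

/-- A probability mass function on a finite type. -/
def IsPMF {α : Type*} [Fintype α] (μ : α → ℝ) : Prop :=
  (∀ x, 0 ≤ μ x) ∧ ∑ x, μ x = 1

/-- Kullback–Leibler divergence. -/
noncomputable def KL {α : Type*} [Fintype α] (μ γ : α → ℝ) : ℝ :=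
  ∑ x, μ x * Real.log (μ x / γ x)

/-- The Gibbs measure of the potential `f` relative to the reference measure `l`. -/
noncomputable def gibbs {α : Type*} [Fintype α] (f : α → ℝ) (l : α → ℝ) : α → ℝ :=
  fun x => Real.exp (f x) * l x / ∑ y, Real.exp (f y) * l y

/-- Product of the measures `l i` on the product space. -/
noncomputable def prodMeas {n : ℕ} {K : Fin n → Type*} [∀ i, Fintype (K i)]
    (l : ∀ i, K i → ℝ) : (∀ i, K i) → ℝ :=
  fun x => ∏ i, l i (x i)

/-- Discrete partial derivative `∂ᵢf(x,y)` with reference points `star`. -/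
noncomputable def dpart {n : ℕ} {K : Fin n → Type*} (f : (∀ i, K i) → ℝ)
    (star : ∀ i, K i) (i : Fin n) (x : ∀ j, K j) (y : K i) : ℝ :=
  f (Function.update x i y) - f (Function.update x i (star i))

/-- Discrete gradient `∇f(x,y) = Σᵢ ∂ᵢf(x,yᵢ)` with reference points `star`. -/
noncomputable def dgrad {n : ℕ} {K : Fin n → Type*} (f : (∀ i, K i) → ℝ)
    (star : ∀ i, K i) (x y : ∀ i, K i) : ℝ :=
  ∑ i, dpart f star i x (y i)

/-- The product Gibbs measure `ξ_{∇f(x,·)} = ∏ᵢ ξ_{∂ᵢf(x,·)}` of the additively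
separable potential `∇f(x,·)`. -/
noncomputable def xiGrad {n : ℕ} {K : Fin n → Type*} [∀ i, Fintype (K i)]
    (f : (∀ i, K i) → ℝ) (star : ∀ i, K i) (l : ∀ i, K i → ℝ) (x : ∀ i, K i) :
    (∀ i, K i) → ℝ :=
  fun y => ∏ i, gibbs (dpart f star i x) (l i) (y i)

/-- Shannon entropy of a probability mass function. -/
noncomputable def ent {α : Type*} [Fintype α] (μ : α → ℝ) : ℝ :=
  -∑ x, μ x * Real.log (μ x)

/-- Glue a value `y` in coordinate `i` to a configuration `z` of the remaining coordinates. -/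
def glue {n : ℕ} {K : Fin n → Type*} (i : Fin n)
    (z : (j : {j : Fin n // j ≠ i}) → K j.1) (y : K i) : ∀ j, K j :=
  fun j => if h : j = i then cast (congrArg K h.symm) y else z ⟨j, h⟩

/-- Marginal of a measure on `∏ j, K j` on the coordinates other than `i`. -/
noncomputable def margRest {n : ℕ} {K : Fin n → Type*} [∀ i, Fintype (K i)]
    (μ : (∀ j, K j) → ℝ) (i : Fin n) : ((j : {j : Fin n // j ≠ i}) → K j.1) → ℝ :=
  fun z => ∑ y : K i, μ (glue i z y)

/-- Dual total correlation: `DTC(μ) = H(μ) - Σᵢ H_μ(xᵢ | x_{[n]∖i})`, where the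
conditional entropy is `H(μ) - H(margRest μ i)`. -/
noncomputable def DTC {n : ℕ} {K : Fin n → Type*} [∀ i, Fintype (K i)]
    (μ : (∀ j, K j) → ℝ) : ℝ :=
  ent μ - ∑ i, (ent μ - ent (margRest μ i))

/-- Mass of the cell labelled `j` of the partition given by the labelling `c`. -/
noncomputable def cellMass {α : Type*} [Fintype α] {I : Type*} [Fintype I] [DecidableEq I]
    (μ : α → ℝ) (c : α → I) (j : I) : ℝ :=
  ∑ x, if c x = j then μ x else 0

/-- The measure `μ` conditioned on the cell labelled `j`. -/
noncomputable def condMeas {α : Type*} [Fintype α] {I : Type*} [Fintype I] [DecidableEq I]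
    (μ : α → ℝ) (c : α → I) (j : I) : α → ℝ :=
  fun x => if c x = j then μ x / cellMass μ c j else 0

/-- Shannon entropy of the partition given by the labelling `c`, under `μ`. -/
noncomputable def partEnt {α : Type*} [Fintype α] {I : Type*} [Fintype I] [DecidableEq I]
    (μ : α → ℝ) (c : α → I) : ℝ :=
  -∑ j, cellMass μ c j * Real.log (cellMass μ c j)

section Aux
open MeasureTheory
open scoped ENNReal


lemma avg_lt {β : Type*} [Fintype β] (p v : β → ℝ) (B : ℝ)
    (hp : ∀ b, 0 ≤ p b) (hs : ∑ b, p b = 1) (hv : ∀ b, p b ≠ 0 → v b < B) :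
    ∑ b, p b * v b < B := by
  classical
  have hex : ∃ b, p b ≠ 0 := by
    by_contra h
    push_neg at h
    rw [Finset.sum_eq_zero (fun b _ => h b)] at hs
    exact one_ne_zero hs.symm
  obtain ⟨b0, hb0⟩ := hex
  have h1 : ∑ b, p b * v b < ∑ b, p b * B := by
    apply Finset.sum_lt_sum
    · intro b _
      by_cases hb : p b = 0
      · simp [hb]
      · exact mul_le_mul_of_nonneg_left (le_of_lt (hv b hb)) (hp b)
    · exact ⟨b0, Finset.mem_univ b0,
        mul_lt_mul_of_pos_left (hv b0 hb0) (lt_of_le_of_ne (hp b0) (Ne.symm hb0))⟩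
  calc ∑ b, p b * v b < ∑ b, p b * B := h1
    _ = B := by rw [← Finset.sum_mul, hs, one_mul]

/-- Discrete Loomis–Whitney inequality. -/
lemma discreteLW {n : ℕ} (hn : 2 ≤ n) (K : Fin n → Type*) [∀ i, Fintype (K i)]
    [∀ i, Nonempty (K i)] (g : (∀ i, K i) → ℝ) (hg : ∀ x, 0 ≤ g x) (hg1 : ∑ x, g x = 1) :
    ∑ x : ∀ i, K i, ∏ i, (∑ u, g (Function.update x i u)) ^ ((1 : ℝ) / (n - 1 : ℝ))
      ≤ 1 := by
  classical
  letI : ∀ i, MeasurableSpace (K i) := fun _ => ⊤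
  haveI : ∀ i, MeasurableSingletonClass (K i) := fun i => ⟨fun _ => trivial⟩
  set μ : ∀ i, Measure (K i) := fun i => Measure.count with hμ
  have hpi : ∀ F : (∀ i, K i) → ℝ≥0∞, ∫⁻ x, F x ∂(Measure.pi μ) = ∑ x, F x := by
    intro F
    rw [lintegral_fintype]
    refine Finset.sum_congr rfl fun x _ => ?_
    have : (Measure.pi μ) {x} = 1 := by
      rw [← Set.univ_pi_singleton x, Measure.pi_pi]
      simp [hμ]
    rw [this, mul_one]
  have hcount : ∀ i (h : K i → ℝ≥0∞), ∫⁻ u, h u ∂(μ i) = ∑ u, h u := by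
    intro i h
    rw [lintegral_fintype]
    simp [hμ]
  have hconj : Real.HolderConjugate (Fintype.card (Fin n)) ((n : ℝ) / (n - 1 : ℝ)) := by
    rw [Fintype.card_fin]
    exact (Real.holderConjugate_iff_eq_conjExponent
      (by exact_mod_cast Nat.lt_of_lt_of_le one_lt_two hn)).2 rfl
  have hn2 : (2:ℝ) ≤ (n:ℝ) := by exact_mod_cast hn
  have hp0 : (0:ℝ) ≤ 1/((n:ℝ)-1) := div_nonneg zero_le_one (by linarith)
  set G : (∀ i, K i) → ℝ≥0∞ := fun x => ENNReal.ofReal (g x) with hG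
  have hGm : Measurable G := measurable_of_countable _
  have key := lintegral_prod_lintegral_pow_le μ hconj hGm
  rw [hpi] at key
  have hGsum : ∑ x, G x = 1 := by
    rw [hG]
    rw [← ENNReal.ofReal_sum_of_nonneg (fun x _ => hg x), hg1, ENNReal.ofReal_one]
  simp_rw [hcount] at key
  rw [hpi, hGsum, ENNReal.one_rpow] at key
  have key2 := key
  -- convert back to reals
  have hcard : ((Fintype.card (Fin n) : ℝ) - 1) = (n : ℝ) - 1 := by rw [Fintype.card_fin]
  rw [hcard] at key2
  have hmarg : ∀ x i, (∑ u, G (Function.update x i u)) = ENNReal.ofReal (∑ u, g (Function.update x i u)) := by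
    intro x i
    rw [ENNReal.ofReal_sum_of_nonneg (fun u _ => hg _)]
  have hfin : ∀ x, ∏ i, (∑ u, G (Function.update x i u)) ^ ((1:ℝ)/(n-1:ℝ))
      = ENNReal.ofReal (∏ i, (∑ u, g (Function.update x i u)) ^ ((1:ℝ)/(n-1:ℝ))) := by
    intro x
    rw [ENNReal.ofReal_prod_of_nonneg
      (fun i _ => Real.rpow_nonneg (Finset.sum_nonneg fun u _ => hg _) _)]
    exact Finset.prod_congr rfl fun i _ => by
      rw [hmarg, ENNReal.ofReal_rpow_of_nonneg (Finset.sum_nonneg fun u _ => hg _) hp0]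
  simp_rw [hfin] at key2
  rw [← ENNReal.ofReal_sum_of_nonneg (fun x _ => Finset.prod_nonneg fun i _ => Real.rpow_nonneg (Finset.sum_nonneg fun u _ => hg _) _)] at key2
  have := (ENNReal.ofReal_le_one).mp key2
  exact this

lemma ST_nonpos {n : ℕ} (hn : 0 < n) (K : Fin n → Type*) [∀ i, Fintype (K i)]
    [∀ i, Nonempty (K i)] (μ : (∀ i, K i) → ℝ) (hpos : ∀ x, 0 < μ x)
    (hsum : ∑ x, μ x = 1) :
    ∑ x, μ x * (∑ i, Real.log (∑ u, μ (Function.update x i u))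
        - ((n : ℝ) - 1) * Real.log (μ x)) ≤ 0 := by
  classical
  have hm : ∀ (x : ∀ i, K i) i, 0 < ∑ u, μ (Function.update x i u) :=
    fun x i => Finset.sum_pos (fun u _ => hpos _) univ_nonempty
  rcases Nat.lt_or_ge n 2 with h2 | h2
  · -- n = 1
    interval_cases n
    have : ∀ x : ∀ i, K i, ∀ i, (∑ u, μ (Function.update x i u)) = 1 := by
      intro x i
      rw [← hsum]
      apply Fintype.sum_bijective (fun u => Function.update x i u)
      · constructor
        · intro u v huv
          have := congrArg (fun z => z i) huv
          simpa using this
        · intro z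
          refine ⟨z i, ?_⟩
          funext j
          have : j = i := Subsingleton.elim j i
          subst this
          simp
      · intro u; rfl
    have hz : ∀ x : ∀ i, K i, μ x * (∑ i, Real.log (∑ u, μ (Function.update x i u))
        - ((1 : ℝ) - 1) * Real.log (μ x)) = 0 := by
      intro x
      have : ∑ i, Real.log (∑ u, μ (Function.update x i u)) = 0 := by
        rw [Fin.sum_univ_one]
        rw [this x 0, Real.log_one]
      rw [this]
      ring_nf
    push_cast
    exact le_of_eq (Finset.sum_eq_zero fun x _ => hz x)
  · -- n ≥ 2
    set c : ℝ := (n : ℝ) - 1 with hc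
    have hn2 : (2:ℝ) ≤ (n:ℝ) := by exact_mod_cast h2
    have hcpos : 0 < c := by rw [hc]; linarith
    set ρ : (∀ i, K i) → ℝ := fun x => ∏ i, (∑ u, μ (Function.update x i u)) ^ ((1:ℝ)/c)
      with hρ
    have hρpos : ∀ x, 0 < ρ x := fun x => Finset.prod_pos fun i _ => Real.rpow_pos_of_pos (hm x i) _
    have hlogρ : ∀ x, Real.log (ρ x) = (1/c) * ∑ i, Real.log (∑ u, μ (Function.update x i u)) := by
      intro x
      rw [hρ]
      rw [Real.log_prod (fun i _ => ne_of_gt (Real.rpow_pos_of_pos (hm x i) _))]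
      rw [Finset.mul_sum]
      exact Finset.sum_congr rfl fun i _ => by
        rw [Real.log_rpow (hm x i)]
    have step1 : ∀ x, μ x * (∑ i, Real.log (∑ u, μ (Function.update x i u))
        - c * Real.log (μ x)) = c * (μ x * (Real.log (ρ x) - Real.log (μ x))) := by
      intro x
      rw [hlogρ]
      field_simp
    calc ∑ x, μ x * (∑ i, Real.log (∑ u, μ (Function.update x i u)) - c * Real.log (μ x))
        = c * ∑ x, μ x * (Real.log (ρ x) - Real.log (μ x)) := by
          rw [Finset.mul_sum]; exact Finset.sum_congr rfl fun x _ => step1 x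
      _ ≤ c * ∑ x, (ρ x - μ x) := by
          apply mul_le_mul_of_nonneg_left _ (le_of_lt hcpos)
          apply Finset.sum_le_sum
          intro x _
          have h1 : Real.log (ρ x) - Real.log (μ x) = Real.log (ρ x / μ x) := by
            rw [Real.log_div (ne_of_gt (hρpos x)) (ne_of_gt (hpos x))]
          have h2 : Real.log (ρ x / μ x) ≤ ρ x / μ x - 1 :=
            Real.log_le_sub_one_of_pos (div_pos (hρpos x) (hpos x))
          have h3 : μ x * (Real.log (ρ x) - Real.log (μ x)) ≤ μ x * (ρ x / μ x - 1) := by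
            rw [h1]
            exact mul_le_mul_of_nonneg_left h2 (le_of_lt (hpos x))
          calc μ x * (Real.log (ρ x) - Real.log (μ x)) ≤ μ x * (ρ x / μ x - 1) := h3
            _ = ρ x - μ x := by rw [mul_sub, mul_one, mul_div_cancel₀ _ (ne_of_gt (hpos x))]
      _ = c * (∑ x, ρ x - 1) := by rw [Finset.sum_sub_distrib, hsum]
      _ ≤ 0 := by
          have hLW := discreteLW h2 K μ (fun x => le_of_lt (hpos x)) hsum
          have : ∑ x, ρ x ≤ 1 := hLW
          nlinarith

end Aux

/-- Theorem A, part (b): if `𝒫` is a partition such that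
`‖∇f(x,·) - ∇f(y,·)‖_∞ < δn` whenever `x,y` lie in the same cell, then
`Σ_P μ(P) ∫ D(μ|_P ‖ ξ_{∇f(y,·)}) μ|_P(dy) < H_μ(𝒫) + δn`. -/
theorem theoremA_b {n : ℕ} (hn : 0 < n) (K : Fin n → Type*)
    [∀ i, Fintype (K i)] [∀ i, Nonempty (K i)]
    (l : ∀ i, K i → ℝ) (hl : ∀ i, IsPMF (l i)) (hlpos : ∀ i x, 0 < l i x)
    (star : ∀ i, K i) (f : (∀ i, K i) → ℝ)
    {I : Type*} [Fintype I] [DecidableEq I] (c : (∀ i, K i) → I)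
    (δ : ℝ) (hδ : 0 < δ)
    (hP : ∀ x y : ∀ i, K i, c x = c y →
      ∀ z, |dgrad f star x z - dgrad f star y z| < δ * n)
    (μ : (∀ i, K i) → ℝ) (hμ : μ = gibbs f (prodMeas l)) :
    (∑ j, cellMass μ c j *
        ∑ y, condMeas μ c j y * KL (condMeas μ c j) (xiGrad f star l y))
      < partEnt μ c + δ * n := by
  classical
  haveI hαne : Nonempty (∀ i, K i) := ⟨star⟩
  have hlampos : ∀ x, 0 < prodMeas l x := fun x => Finset.prod_pos fun i _ => hlpos i (x i)
  set Z : ℝ := ∑ x, Real.exp (f x) * prodMeas l x with hZdef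
  have hZpos : 0 < Z :=
    Finset.sum_pos (fun x _ => mul_pos (Real.exp_pos _) (hlampos x)) Finset.univ_nonempty
  have hμx : ∀ x, μ x = Real.exp (f x) * prodMeas l x / Z := fun x => by rw [hμ]; rfl
  have hμpos : ∀ x, 0 < μ x := fun x => by
    rw [hμx]; exact div_pos (mul_pos (Real.exp_pos _) (hlampos x)) hZpos
  have hμsum : ∑ x, μ x = 1 := by
    calc ∑ x, μ x = ∑ x, Real.exp (f x) * prodMeas l x / Z :=
          Finset.sum_congr rfl fun x _ => hμx x
      _ = Z / Z := by rw [← Finset.sum_div]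
      _ = 1 := div_self (ne_of_gt hZpos)
  set W : (∀ i, K i) → ℝ := fun y => ∏ i, ∑ u, Real.exp (dpart f star i y u) * l i u with hWdef
  have hZipos : ∀ (i : Fin n) y, 0 < ∑ u, Real.exp (dpart f star i y u) * l i u :=
    fun i y => Finset.sum_pos (fun u _ => mul_pos (Real.exp_pos _) (hlpos i u))
      Finset.univ_nonempty
  have hWpos : ∀ y, 0 < W y := fun y => Finset.prod_pos fun i _ => hZipos i y
  have hξ : ∀ y x, xiGrad f star l y x = Real.exp (dgrad f star y x) * prodMeas l x / W y := by
    intro y x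
    show ∏ i, gibbs (dpart f star i y) (l i) (x i) = _
    rw [dgrad, Real.exp_sum, prodMeas, ← Finset.prod_mul_distrib, hWdef,
      ← Finset.prod_div_distrib]
    exact Finset.prod_congr rfl fun i _ => rfl
  have hξpos : ∀ y x, 0 < xiGrad f star l y x := fun y x => by
    rw [hξ]; exact div_pos (mul_pos (Real.exp_pos _) (hlampos x)) (hWpos y)
  have hlogξ : ∀ y x, Real.log (xiGrad f star l y x)
      = dgrad f star y x + Real.log (prodMeas l x) - Real.log (W y) := by
    intro y x
    rw [hξ, Real.log_div (ne_of_gt (mul_pos (Real.exp_pos _) (hlampos x))) (ne_of_gt (hWpos y)),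
      Real.log_mul (Real.exp_ne_zero _) (ne_of_gt (hlampos x)), Real.log_exp]
  have hmpos : ∀ (x : ∀ i, K i) (i : Fin n), 0 < ∑ u, μ (Function.update x i u) :=
    fun x i => Finset.sum_pos (fun u _ => hμpos _) Finset.univ_nonempty
  have hlamup : ∀ (x : ∀ i, K i) (i : Fin n) (u : K i), prodMeas l (Function.update x i u)
      = l i u * ∏ j ∈ Finset.univ.erase i, l j (x j) := by
    intro x i u
    rw [prodMeas, ← Finset.mul_prod_erase Finset.univ _ (Finset.mem_univ i)]
    congr 1
    · rw [Function.update_self]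
    · exact Finset.prod_congr rfl fun j hj => by
        rw [Function.update_of_ne (Finset.mem_erase.1 hj).1]
  have hξdiag : ∀ x, xiGrad f star l x x
      = ∏ i, (μ x / ∑ u, μ (Function.update x i u)) := by
    intro x
    show ∏ i, gibbs (dpart f star i x) (l i) (x i) = _
    refine Finset.prod_congr rfl fun i _ => ?_
    have hB : 0 < ∏ j ∈ Finset.univ.erase i, l j (x j) :=
      Finset.prod_pos fun j _ => hlpos j (x j)
    have hSi : 0 < ∑ u, Real.exp (f (Function.update x i u)) * l i u :=
      Finset.sum_pos (fun u _ => mul_pos (Real.exp_pos _) (hlpos i u)) Finset.univ_nonempty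
    have hupd : Function.update x i (x i) = x := Function.update_eq_self i x
    have hm' : (∑ u, μ (Function.update x i u))
        = (∏ j ∈ Finset.univ.erase i, l j (x j))
          * (∑ u, Real.exp (f (Function.update x i u)) * l i u) / Z := by
      calc ∑ u, μ (Function.update x i u)
          = ∑ u, Real.exp (f (Function.update x i u))
              * (l i u * ∏ j ∈ Finset.univ.erase i, l j (x j)) / Z :=
            Finset.sum_congr rfl fun u _ => by rw [hμx, hlamup]
        _ = _ := by
            rw [← Finset.sum_div]
            congr 1
            rw [Finset.mul_sum]
            exact Finset.sum_congr rfl fun u _ => by ring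
    have hgibbs : gibbs (dpart f star i x) (l i) (x i)
        = Real.exp (f x) * l i (x i)
          / (∑ u, Real.exp (f (Function.update x i u)) * l i u) := by
      show Real.exp (dpart f star i x (x i)) * l i (x i)
          / (∑ u, Real.exp (dpart f star i x u) * l i u) = _
      simp only [dpart, hupd, Real.exp_sub]
      rw [show (∑ u, Real.exp (f (Function.update x i u))
            / Real.exp (f (Function.update x i (star i))) * l i u)
          = (∑ u, Real.exp (f (Function.update x i u)) * l i u)
            / Real.exp (f (Function.update x i (star i))) by
        rw [Finset.sum_div]
        exact Finset.sum_congr rfl fun u _ => by ring]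
      rw [div_mul_eq_mul_div, div_div_div_cancel_right₀ (Real.exp_ne_zero _)]
    rw [hgibbs, hm', hμx]
    have hlamx : prodMeas l x = l i (x i) * ∏ j ∈ Finset.univ.erase i, l j (x j) := by
      rw [← hupd, hlamup, hupd]
    rw [hlamx]
    field_simp
  have hlogdiag : ∀ x, Real.log (μ x) - Real.log (xiGrad f star l x x)
      = ∑ i, Real.log (∑ u, μ (Function.update x i u)) - ((n : ℝ) - 1) * Real.log (μ x) := by
    intro x
    rw [hξdiag, Real.log_prod (fun i _ => ne_of_gt (div_pos (hμpos x) (hmpos x i)))]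
    rw [Finset.sum_congr rfl
      (fun i _ => Real.log_div (ne_of_gt (hμpos x)) (ne_of_gt (hmpos x i)))]
    rw [Finset.sum_sub_distrib, Finset.sum_const, Finset.card_univ, Fintype.card_fin,
      nsmul_eq_mul]
    ring
  set T : (∀ i, K i) → ℝ :=
    fun x => Real.log (μ x) - Real.log (xiGrad f star l x x) with hT
  set D : (∀ i, K i) → (∀ i, K i) → ℝ :=
    fun x y => dgrad f star x x - dgrad f star y x with hD
  have hST : ∑ x, μ x * T x ≤ 0 := by
    calc ∑ x, μ x * T x
        = ∑ x, μ x * (∑ i, Real.log (∑ u, μ (Function.update x i u))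
            - ((n : ℝ) - 1) * Real.log (μ x)) :=
          Finset.sum_congr rfl fun x _ => by simp only [hT]; rw [hlogdiag]
      _ ≤ 0 := ST_nonpos hn K μ hμpos hμsum
  set w : I → ℝ := fun j => cellMass μ c j with hw
  set ν : I → (∀ i, K i) → ℝ := fun j => condMeas μ c j with hν
  have hwnn : ∀ j, 0 ≤ w j :=
    fun j => Finset.sum_nonneg fun x _ => by
      by_cases h : c x = j <;> simp [h, le_of_lt (hμpos x)]
  have hwx : ∀ x, μ x ≤ w (c x) := by
    intro x
    have := Finset.single_le_sum (f := fun z => if c z = c x then μ z else 0)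
      (fun z _ => by by_cases h : c z = c x <;> simp [h, le_of_lt (hμpos z)])
      (Finset.mem_univ x)
    rw [if_pos rfl] at this
    exact this
  have hwpos : ∀ x, 0 < w (c x) := fun x => lt_of_lt_of_le (hμpos x) (hwx x)
  have hνzero : ∀ j x, c x ≠ j → ν j x = 0 := fun j x h => by
    simp [hν, condMeas, h]
  have hνval : ∀ j x, c x = j → ν j x = μ x / w j := fun j x h => by
    simp [hν, hw, condMeas, h]
  have hνnn : ∀ j x, 0 ≤ ν j x := by
    intro j x
    by_cases h : c x = j
    · rw [hνval j x h]; exact div_nonneg (le_of_lt (hμpos x)) (hwnn j)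
    · rw [hνzero j x h]
  have hν0 : ∀ j, w j = 0 → ∀ x, ν j x = 0 := by
    intro j hj x
    by_cases h : c x = j
    · rw [hνval j x h, hj, div_zero]
    · exact hνzero j x h
  have hνne : ∀ j x, ν j x ≠ 0 → c x = j := by
    intro j x h
    by_contra hc
    exact h (hνzero j x hc)
  have hνsum : ∀ j, w j ≠ 0 → ∑ x, ν j x = 1 := by
    intro j hj
    have h1 : ∀ x, ν j x = (if c x = j then μ x else 0) / w j := by
      intro x
      by_cases h : c x = j
      · rw [hνval j x h, if_pos h]
      · rw [hνzero j x h, if_neg h, zero_div]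
    rw [Finset.sum_congr rfl fun x _ => h1 x, ← Finset.sum_div]
    rw [show (∑ x, if c x = j then μ x else 0) = w j from rfl]
    exact div_self hj
  have hwν : ∀ j x, w j * ν j x = if c x = j then μ x else 0 := by
    intro j x
    by_cases h : c x = j
    · rw [hνval j x h, if_pos h, mul_div_cancel₀]
      rw [← h]
      exact ne_of_gt (hwpos x)
    · rw [hνzero j x h, if_neg h, mul_zero]
  have hwνsum : ∀ x, ∑ j, w j * ν j x = μ x := by
    intro x
    rw [Finset.sum_congr rfl fun j _ => hwν j x]
    simp
  have hwsum : ∑ j, w j = 1 := by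
    calc ∑ j, w j = ∑ j, ∑ x, (if c x = j then μ x else 0) := rfl
      _ = ∑ x, ∑ j, (if c x = j then μ x else 0) := Finset.sum_comm
      _ = ∑ x, μ x := Finset.sum_congr rfl fun x _ => by simp
      _ = 1 := hμsum
  -- the per-cell identity
  have hJ : ∀ j, w j * ∑ y, ν j y * KL (ν j) (xiGrad f star l y)
      = w j * (- Real.log (w j)) + (∑ x, (w j * ν j x) * T x)
        + ∑ y, ∑ x, ((w j * ν j y) * ν j x) * D x y := by
    intro j
    by_cases hwj : w j = 0
    · simp [hwj]
    · have hν1 : ∑ x, ν j x = 1 := hνsum j hwj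
      have hpt : ∀ y x, ν j x * Real.log (ν j x / xiGrad f star l y x)
          = ν j x * ((- Real.log (w j)) + T x + D x y
            + (Real.log (W y) - Real.log (W x))) := by
        intro y x
        by_cases hx : ν j x = 0
        · rw [hx, zero_mul, zero_mul]
        · have hcx : c x = j := hνne j x hx
          have hνx : ν j x = μ x / w j := hνval j x hcx
          have hνpos : 0 < ν j x := by
            rw [hνx]
            exact div_pos (hμpos x) (lt_of_le_of_ne (hwnn j) (Ne.symm hwj))
          congr 1
          rw [Real.log_div (ne_of_gt hνpos) (ne_of_gt (hξpos y x))]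
          rw [hνx, Real.log_div (ne_of_gt (hμpos x)) hwj]
          simp only [hT, hD]
          rw [hlogξ y x, hlogξ x x]
          ring
      have hsplit : ∀ y, ∑ x, ν j x * ((- Real.log (w j)) + T x + D x y
            + (Real.log (W y) - Real.log (W x)))
          = (- Real.log (w j)) + (∑ x, ν j x * T x) + (∑ x, ν j x * D x y)
            + Real.log (W y) - (∑ x, ν j x * Real.log (W x)) := by
        intro y
        have h2 : ∀ x, ν j x * ((- Real.log (w j)) + T x + D x y
              + (Real.log (W y) - Real.log (W x)))
            = ν j x * (- Real.log (w j)) + ν j x * T x + ν j x * D x y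
              + ν j x * Real.log (W y) - ν j x * Real.log (W x) := fun x => by ring
        rw [Finset.sum_congr rfl fun x _ => h2 x]
        rw [Finset.sum_sub_distrib, Finset.sum_add_distrib, Finset.sum_add_distrib,
          Finset.sum_add_distrib, ← Finset.sum_mul, ← Finset.sum_mul, hν1, one_mul, one_mul]
      calc w j * ∑ y, ν j y * KL (ν j) (xiGrad f star l y)
          = w j * ∑ y, ν j y * ((- Real.log (w j)) + (∑ x, ν j x * T x)
              + (∑ x, ν j x * D x y) + Real.log (W y)
              - (∑ x, ν j x * Real.log (W x))) := by
            congr 1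
            refine Finset.sum_congr rfl fun y _ => ?_
            congr 1
            rw [show KL (ν j) (xiGrad f star l y)
                = ∑ x, ν j x * Real.log (ν j x / xiGrad f star l y x) from rfl]
            rw [Finset.sum_congr rfl fun x _ => hpt y x]
            exact hsplit y
        _ = w j * ((- Real.log (w j)) + (∑ x, ν j x * T x)
              + ∑ y, ν j y * ∑ x, ν j x * D x y) := by
            congr 1
            have h3 : ∀ y, ν j y * ((- Real.log (w j)) + (∑ x, ν j x * T x)
                  + (∑ x, ν j x * D x y) + Real.log (W y)
                  - (∑ x, ν j x * Real.log (W x)))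
                = ν j y * ((- Real.log (w j)) + (∑ x, ν j x * T x)
                    - (∑ x, ν j x * Real.log (W x)))
                  + ν j y * Real.log (W y) + ν j y * (∑ x, ν j x * D x y) := fun y => by ring
            rw [Finset.sum_congr rfl fun y _ => h3 y]
            rw [Finset.sum_add_distrib, Finset.sum_add_distrib, ← Finset.sum_mul, hν1, one_mul]
            ring
        _ = _ := by
            rw [mul_add, mul_add]
            congr 1
            · congr 1
              · rw [Finset.mul_sum]
                exact Finset.sum_congr rfl fun x _ => by ring
            · rw [Finset.mul_sum]
              refine Finset.sum_congr rfl fun y _ => ?_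
              rw [Finset.mul_sum, Finset.mul_sum]
              exact Finset.sum_congr rfl fun x _ => by ring
  -- assemble
  have hgoal : (∑ j, w j * ∑ y, ν j y * KL (ν j) (xiGrad f star l y))
      = partEnt μ c + (∑ x, μ x * T x)
        + ∑ j, ∑ y, ∑ x, ((w j * ν j y) * ν j x) * D x y := by
    rw [Finset.sum_congr rfl fun j _ => hJ j]
    rw [Finset.sum_add_distrib, Finset.sum_add_distrib]
    congr 2
    · show ∑ j, w j * (- Real.log (w j)) = - ∑ j, w j * Real.log (w j)
      rw [← Finset.sum_neg_distrib]
      exact Finset.sum_congr rfl fun j _ => by ring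
    · rw [Finset.sum_comm]
      refine Finset.sum_congr rfl fun x _ => ?_
      rw [← Finset.sum_mul, hwνsum x]
  have hbound : ∀ j y x, ν j y ≠ 0 → ν j x ≠ 0 → D x y < δ * n := by
    intro j y x hy hx
    have h1 : c y = j := hνne j y hy
    have h2 : c x = j := hνne j x hx
    have h3 : c x = c y := by rw [h1, h2]
    have := hP x y h3 x
    calc D x y ≤ |dgrad f star x x - dgrad f star y x| := by
          rw [hD]; exact le_abs_self _
      _ < δ * n := this
  have hSD : (∑ j, ∑ y, ∑ x, ((w j * ν j y) * ν j x) * D x y) < δ * n := by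
    have hper : ∀ j, (∑ y, ∑ x, ((w j * ν j y) * ν j x) * D x y) ≤ w j * (δ * n) := by
      intro j
      by_cases hwj : w j = 0
      · simp [hwj]
      · have hν1 : ∑ x, ν j x = 1 := hνsum j hwj
        have h1 : ∀ y x, ((w j * ν j y) * ν j x) * D x y
            ≤ ((w j * ν j y) * ν j x) * (δ * n) := by
          intro y x
          by_cases hy : ν j y = 0
          · simp [hy]
          by_cases hx : ν j x = 0
          · simp [hx]
          exact mul_le_mul_of_nonneg_left (le_of_lt (hbound j y x hy hx))
            (mul_nonneg (mul_nonneg (hwnn j) (hνnn j y)) (hνnn j x))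
        calc ∑ y, ∑ x, ((w j * ν j y) * ν j x) * D x y
            ≤ ∑ y, ∑ x, ((w j * ν j y) * ν j x) * (δ * n) :=
              Finset.sum_le_sum fun y _ => Finset.sum_le_sum fun x _ => h1 y x
          _ = w j * (δ * n) := by
              have h4 : ∀ y, ∑ x, ((w j * ν j y) * ν j x) * (δ * n)
                  = (w j * (δ * n)) * ν j y := by
                intro y
                calc ∑ x, ((w j * ν j y) * ν j x) * (δ * n)
                    = ∑ x, ((w j * ν j y) * (δ * n)) * ν j x :=
                      Finset.sum_congr rfl fun x _ => by ring
                  _ = ((w j * ν j y) * (δ * n)) * ∑ x, ν j x := by rw [Finset.mul_sum]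
                  _ = (w j * (δ * n)) * ν j y := by rw [hν1]; ring
              rw [Finset.sum_congr rfl fun y _ => h4 y, ← Finset.mul_sum, hν1, mul_one]
    have hstrict : ∃ j ∈ Finset.univ,
        (∑ y, ∑ x, ((w j * ν j y) * ν j x) * D x y) < w j * (δ * n) := by
      obtain ⟨x0⟩ := hαne
      refine ⟨c x0, Finset.mem_univ _, ?_⟩
      have hwj : w (c x0) ≠ 0 := ne_of_gt (hwpos x0)
      have hν1 : ∑ x, ν (c x0) x = 1 := hνsum (c x0) hwj
      have htrans : ∑ y, ∑ x, ((w (c x0) * ν (c x0) y) * ν (c x0) x) * D x y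
          = w (c x0) * ∑ y, ν (c x0) y * (∑ x, ν (c x0) x * D x y) := by
        rw [Finset.mul_sum]
        refine Finset.sum_congr rfl fun y _ => ?_
        rw [Finset.mul_sum, Finset.mul_sum]
        exact Finset.sum_congr rfl fun x _ => by ring
      rw [htrans]
      have hinner : ∀ y, ν (c x0) y ≠ 0 → (∑ x, ν (c x0) x * D x y) < δ * n :=
        fun y hy => avg_lt _ _ _ (hνnn _) hν1 (fun x hx => hbound _ y x hy hx)
      have havg := avg_lt (ν (c x0)) (fun y => ∑ x, ν (c x0) x * D x y) (δ * n)
        (hνnn _) hν1 hinner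
      exact mul_lt_mul_of_pos_left havg (hwpos x0)
    calc (∑ j, ∑ y, ∑ x, ((w j * ν j y) * ν j x) * D x y)
        < ∑ j, w j * (δ * n) := Finset.sum_lt_sum (fun j _ => hper j) hstrict
      _ = δ * n := by rw [← Finset.sum_mul, hwsum, one_mul]
  rw [hgoal]
  linarith [hST, hSD]
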